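/- For every polynomial F ∈ R[t_0,…,t_r], every integer d ≥ 1, and every index 0 ≤ i ≤ r−2, setting u := e_i + (d−1)·e_r, the coefficient of t^u in σ_ω(F) equals [t^u]F + ω·[t^{u + e_{i+1} − e_i}]F. -/

import Mathlib

open MvPolynomial Finset

/-- The `R`-algebra endomorphism `σ_ω` of `R[t_0, …, t_r]` determined by
`σ_ω(t_0) = t_0` and `σ_ω(t_i) = t_i + ω·t_{i-1}` for `1 ≤ i ≤ r`. -/
noncomputable def sigmaOmega {R : Type*} [CommRing R] {r : ℕ} (ω : R) :
    MvPolynomial (Fin (r + 1)) R →ₐ[R] MvPolynomial (Fin (r + 1)) R :=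
  aeval fun i : Fin (r + 1) =>
    if i.1 = 0 then X i
    else X i + C ω * X ⟨i.1 - 1, lt_of_le_of_lt (Nat.sub_le _ _) i.isLt⟩

lemma prod_monomial' {R σ ι : Type*} [CommSemiring R] (s : Finset ι)
    (f : ι → (σ →₀ ℕ)) (a : ι → R) :
    ∏ j ∈ s, (monomial (f j) (a j) : MvPolynomial σ R)
      = monomial (∑ j ∈ s, f j) (∏ j ∈ s, a j) := by
  induction s using Finset.cons_induction with
  | empty => simp
  | cons j s hj ih => simp [Finset.prod_cons, Finset.sum_cons, ih, monomial_mul]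

noncomputable def gfun {R ι : Type*} [CommRing R] [DecidableEq ι] (ω : R) (x y z : ι) :
    ι → MvPolynomial (Fin 2) R := fun j =>
  monomial (Finsupp.single 0 (if j = x ∨ j = y then 1 else 0)
      + Finsupp.single 1 (if j = z then 1 else 0))
    (if j = x ∨ j = z then 1 else if j = y then ω else 0)

lemma sum_ite_two {ι : Type*} [DecidableEq ι] (x y : ι) (hxy : x ≠ y)
    (w : ι →₀ ℕ) :
    ∑ j ∈ w.support, w j * (if j = x ∨ j = y then 1 else 0) = w x + w y := by
  have : ∀ j, w j * (if j = x ∨ j = y then 1 else 0)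
      = (if j = x then w j else 0) + (if j = y then w j else 0) := by
    intro j; split_ifs with h1 h2 h3 <;> simp_all
  simp only [this, Finset.sum_add_distrib, Finset.sum_ite_eq' w.support,
    Finsupp.mem_support_iff]
  split_ifs <;> simp_all

lemma sum_ite_one {ι : Type*} [DecidableEq ι] (z : ι) (w : ι →₀ ℕ) :
    ∑ j ∈ w.support, w j * (if j = z then 1 else 0) = w z := by
  have : ∀ j, w j * (if j = z then 1 else 0) = (if j = z then w j else 0) := by
    intro j; split_ifs <;> simp_all
  simp only [this, Finset.sum_ite_eq' w.support, Finsupp.mem_support_iff]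
  split_ifs <;> simp_all

lemma fin2_pair_eq (a b c e : ℕ) :
    (Finsupp.single (0:Fin 2) a + Finsupp.single 1 b
      = Finsupp.single 0 c + Finsupp.single 1 e) ↔ a = c ∧ b = e := by
  constructor
  · intro h
    exact ⟨by simpa using DFunLike.congr_fun h 0, by simpa using DFunLike.congr_fun h 1⟩
  · rintro ⟨rfl, rfl⟩; rfl

lemma pair_apply {ι : Type*} [DecidableEq ι] (x z : ι) (hxz : x ≠ z) (m k : ℕ) (j : ι) :
    (Finsupp.single x m + Finsupp.single z k) j
      = if j = x then m else if j = z then k else 0 := by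
  rcases eq_or_ne j x with rfl | hx
  · simp [Finsupp.single_apply, hxz, Ne.symm hxz]
  · rcases eq_or_ne j z with rfl | hz
    · simp [Finsupp.single_apply, hxz, Ne.symm hxz, hx]
    · simp [Finsupp.single_apply, Ne.symm hx, Ne.symm hz, hx, hz]

lemma coeff_aeval_gfun {R ι : Type*} [CommRing R] [DecidableEq ι] (ω : R)
    (x y z : ι) (hxy : x ≠ y) (hxz : x ≠ z) (hyz : y ≠ z) (d : ℕ) (hd : 1 ≤ d)
    (P : MvPolynomial ι R) :
    coeff (Finsupp.single 0 1 + Finsupp.single 1 (d-1)) (aeval (gfun ω x y z) P) =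
    coeff (Finsupp.single x 1 + Finsupp.single z (d-1)) P
      + ω * coeff (Finsupp.single y 1 + Finsupp.single z (d-1)) P := by
  induction P using MvPolynomial.induction_on' with
  | add p q hp hq => simp only [map_add, coeff_add, hp, hq]; ring
  | monomial w c =>
    rw [aeval_monomial]
    rw [Finsupp.prod]
    simp only [gfun, monomial_pow]
    rw [prod_monomial']
    have hsmul : ∀ j : ι, w j • (Finsupp.single (0:Fin 2) (if j = x ∨ j = y then 1 else 0)
        + Finsupp.single 1 (if j = z then 1 else 0))
        = Finsupp.single (0:Fin 2) (w j * (if j = x ∨ j = y then 1 else 0))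
          + Finsupp.single 1 (w j * (if j = z then 1 else 0)) := by
      intro j
      rw [smul_add, Finsupp.smul_single, Finsupp.smul_single, smul_eq_mul, smul_eq_mul]
    simp only [hsmul]
    rw [Finset.sum_add_distrib, ← Finsupp.single_finset_sum, ← Finsupp.single_finset_sum,
      sum_ite_two x y hxy w, sum_ite_one z w]
    rw [algebraMap_eq, C_mul_monomial, coeff_monomial, coeff_monomial, coeff_monomial]
    rw [if_congr (fin2_pair_eq _ _ _ _) rfl rfl]
    by_cases hu : w = Finsupp.single x 1 + Finsupp.single z (d-1)
    · have hwx : w x = 1 := by rw [hu, pair_apply x z hxz]; simp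
      have hwy : w y = 0 := by
        rw [hu, pair_apply x z hxz]; simp [Ne.symm hxy, hyz]
      have hwz : w z = d - 1 := by
        rw [hu, pair_apply x z hxz]; simp [Ne.symm hxz]
      have hu' : ¬ (w = Finsupp.single y 1 + Finsupp.single z (d-1)) := by
        intro h
        have := DFunLike.congr_fun h y
        rw [pair_apply y z hyz] at this
        simp [hwy] at this
      rw [if_pos hu, if_neg hu', if_pos ⟨by omega, hwz⟩]
      have hA : ∏ j ∈ w.support,
          (if j = x ∨ j = z then 1 else if j = y then ω else 0) ^ w j = 1 := by
        apply Finset.prod_eq_one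
        intro j hj
        have hjne : w j ≠ 0 := Finsupp.mem_support_iff.mp hj
        have : j = x ∨ j = z := by
          by_contra hc
          push_neg at hc
          rw [hu, pair_apply x z hxz, if_neg hc.1, if_neg hc.2] at hjne
          exact hjne rfl
        rw [if_pos this, one_pow]
      rw [hA]; ring
    · by_cases hu' : w = Finsupp.single y 1 + Finsupp.single z (d-1)
      · have hwx : w x = 0 := by
          rw [hu', pair_apply y z hyz]; simp [hxy, hxz]
        have hwy : w y = 1 := by rw [hu', pair_apply y z hyz]; simp
        have hwz : w z = d - 1 := by
          rw [hu', pair_apply y z hyz]; simp [Ne.symm hyz]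
        rw [if_neg hu, if_pos hu', if_pos ⟨by omega, hwz⟩]
        have hA : ∏ j ∈ w.support,
            (if j = x ∨ j = z then 1 else if j = y then ω else 0) ^ w j = ω := by
          rw [Finset.prod_eq_single y]
          · simp [hxy.symm, hyz, hwy]
          · intro j hj hjy
            have hjne : w j ≠ 0 := Finsupp.mem_support_iff.mp hj
            have : j = z := by
              by_contra hc
              rw [hu', pair_apply y z hyz, if_neg hjy, if_neg hc] at hjne
              exact hjne rfl
            subst this
            simp
          · intro h
            exact absurd (Finsupp.mem_support_iff.mpr (by omega)) h
        rw [hA]; ring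
      · rw [if_neg hu, if_neg hu']
        by_cases hcond : w x + w y = 1 ∧ w z = d - 1
        · obtain ⟨h1, h2⟩ := hcond
          have hex : ∃ j, j ≠ x ∧ j ≠ y ∧ j ≠ z ∧ w j ≠ 0 := by
            by_contra hc
            push_neg at hc
            rcases Nat.eq_zero_or_pos (w x) with hx0 | hx1
            · apply hu'
              ext j
              rw [pair_apply y z hyz]
              rcases eq_or_ne j y with rfl | hjy
              · simp; omega
              · rcases eq_or_ne j z with rfl | hjz
                · simp [Ne.symm hyz, h2]
                · rcases eq_or_ne j x with rfl | hjx
                  · simp [hxy, hxz]; omega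
                  · rw [if_neg hjy, if_neg hjz]
                    exact hc j hjx hjy hjz
            · apply hu
              ext j
              rw [pair_apply x z hxz]
              rcases eq_or_ne j x with rfl | hjx
              · simp; omega
              · rcases eq_or_ne j z with rfl | hjz
                · simp [Ne.symm hxz, h2]
                · rcases eq_or_ne j y with rfl | hjy
                  · simp [Ne.symm hxy, hyz]; omega
                  · rw [if_neg hjx, if_neg hjz]
                    exact hc j hjx hjy hjz
          obtain ⟨j, hjx, hjy, hjz, hjw⟩ := hex
          have hA : ∏ j ∈ w.support,
              (if j = x ∨ j = z then 1 else if j = y then ω else 0) ^ w j = 0 := by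
            apply Finset.prod_eq_zero (Finsupp.mem_support_iff.mpr hjw)
            rw [if_neg (by tauto), if_neg hjy]
            exact zero_pow hjw
          rw [if_pos ⟨h1, h2⟩, hA]; ring
        · rw [if_neg hcond]; ring

lemma comp_gfun {R : Type*} [CommRing R] {r : ℕ} (hr : 2 ≤ r) (ω : R)
    (i : Fin (r+1)) (hi : i.1 ≤ r - 2) (hy : i.1 + 1 < r + 1) :
    (aeval (gfun (0:R) i (⟨i.1+1, hy⟩ : Fin (r+1)) (Fin.last r))).comp (sigmaOmega ω)
      = aeval (gfun ω i (⟨i.1+1, hy⟩ : Fin (r+1)) (Fin.last r)) := by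
  apply MvPolynomial.algHom_ext
  intro j
  rw [AlgHom.comp_apply]
  have hσ : (sigmaOmega ω) (X j) = if j.1 = 0 then X j
      else X j + C ω * X ⟨j.1 - 1, lt_of_le_of_lt (Nat.sub_le _ _) j.isLt⟩ := by
    simp only [sigmaOmega, aeval_X]
  rw [hσ]
  by_cases h0 : j.1 = 0
  · rw [if_pos h0, aeval_X, aeval_X]
    simp only [gfun, Fin.ext_iff, Fin.val_last]
    split_ifs <;>
      first
        | rfl
        | (exfalso; (try casesm* _ ∨ _) <;> omega)
  · rw [if_neg h0, map_add, map_mul, aeval_X, aeval_X, aeval_X, aeval_C]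
    simp only [gfun, Fin.ext_iff, Fin.val_last]
    split_ifs <;>
      first
        | (exfalso; (try casesm* _ ∨ _) <;> omega)
        | simp [C_mul_monomial]

theorem stmt4 {R : Type*} [CommRing R] (r : ℕ) (hr : 2 ≤ r) (ω : R)
    (F : MvPolynomial (Fin (r + 1)) R) (d : ℕ) (hd : 1 ≤ d)
    (i : Fin (r + 1)) (hi : i.1 ≤ r - 2) :
    MvPolynomial.coeff
        (Finsupp.single i 1 + Finsupp.single (Fin.last r) (d - 1))
        (sigmaOmega ω F) =
      MvPolynomial.coeff
        (Finsupp.single i 1 + Finsupp.single (Fin.last r) (d - 1)) F +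
      ω * MvPolynomial.coeff
        (Finsupp.single (⟨i.1 + 1, by omega⟩ : Fin (r + 1)) 1 +
          Finsupp.single (Fin.last r) (d - 1)) F := by
  have hylt : i.1 + 1 < r + 1 := by omega
  have hxy : i ≠ (⟨i.1+1, hylt⟩ : Fin (r+1)) := Fin.ne_of_val_ne (show i.1 ≠ i.1 + 1 by omega)
  have hxz : i ≠ Fin.last r := Fin.ne_of_val_ne (show i.1 ≠ r by omega)
  have hyz : (⟨i.1+1, hylt⟩ : Fin (r+1)) ≠ Fin.last r :=
    Fin.ne_of_val_ne (show i.1 + 1 ≠ r by omega)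
  have h1 := coeff_aeval_gfun (0:R) i (⟨i.1+1, hylt⟩ : Fin (r+1)) (Fin.last r)
    hxy hxz hyz d hd (sigmaOmega ω F)
  rw [zero_mul, add_zero] at h1
  have h2 := coeff_aeval_gfun ω i (⟨i.1+1, hylt⟩ : Fin (r+1)) (Fin.last r)
    hxy hxz hyz d hd F
  have h3 : aeval (gfun (0:R) i (⟨i.1+1, hylt⟩ : Fin (r+1)) (Fin.last r)) (sigmaOmega ω F)
      = aeval (gfun ω i (⟨i.1+1, hylt⟩ : Fin (r+1)) (Fin.last r)) F := by
    have := AlgHom.congr_fun (comp_gfun hr ω i hi hylt) F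
    rwa [AlgHom.comp_apply] at this
  rw [← h1, h3, h2]
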